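/- Let A be a unital associative noncommutatively G-graded R-algebra, and let a ∈ A_g be a nonzero homogeneous element of degree g. If a has a left inverse in A, then a has a left inverse that is homogeneous of degree g⁻¹. -/

import Mathlib

/-- In a unital noncommutatively `G`-graded algebra, a nonzero homogeneous element of
degree `g` with a left inverse has a homogeneous left inverse of degree `g⁻¹`. -/
theorem exists_homogeneous_left_inverse
    {R A G : Type*} [CommRing R] [Ring A] [Algebra R A] [Group G] [DecidableEq G]
    (𝒜 : G → Submodule R A)
    (hdecomp : DirectSum.IsInternal 𝒜)
    (hmul : ∀ g h : G, ∀ a ∈ 𝒜 g, ∀ b ∈ 𝒜 h, a * b ∈ 𝒜 (g * h) ⊔ 𝒜 (h * g))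
    (g : G) (a : A) (ha : a ∈ 𝒜 g) (ha0 : a ≠ 0)
    (hinv : ∃ c : A, c * a = 1) :
    ∃ c ∈ 𝒜 g⁻¹, c * a = 1 := by
  classical
  letI : DirectSum.Decomposition 𝒜 := hdecomp.chooseDecomposition
  -- the projection onto the degree-k component
  set π : G → A → A := fun k x => ((DirectSum.decompose 𝒜 x) k : A) with hπ
  have πadd : ∀ k x y, π k (x + y) = π k x + π k y := by
    intro k x y
    simp [hπ, DirectSum.decompose_add]
  have πsame : ∀ k x, x ∈ 𝒜 k → π k x = x := fun k x h =>
    DirectSum.decompose_of_mem_same 𝒜 h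
  have πne : ∀ k k' x, x ∈ 𝒜 k → k ≠ k' → π k' x = 0 := fun k k' x h hkk' =>
    DirectSum.decompose_of_mem_ne 𝒜 h hkk'
  -- projection kills an element of 𝒜 k ⊔ 𝒜 k' when k ≠ j and k' ≠ j
  have πsup : ∀ k k' j x, x ∈ 𝒜 k ⊔ 𝒜 k' → k ≠ j → k' ≠ j → π j x = 0 := by
    intro k k' j x hx hk hk'
    rw [Submodule.mem_sup] at hx
    obtain ⟨y, hy, z, hz, rfl⟩ := hx
    rw [πadd, πne k j y hy hk, πne k' j z hz hk', add_zero]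
  -- Step 1 : the identity element is homogeneous of degree 1
  have hone : (1 : A) ∈ 𝒜 1 := by
    set u : A := π 1 1 with hu
    have humem : u ∈ 𝒜 1 := (DirectSum.decompose 𝒜 1 1).2
    -- right multiplication by u fixes homogeneous elements
    have hhom : ∀ k : G, ∀ x ∈ 𝒜 k, x * u = x := by
      intro k x hx
      have h1 : x = ∑ h ∈ (DirectSum.decompose 𝒜 (1 : A)).support,
          x * ((DirectSum.decompose 𝒜 (1 : A)) h : A) := by
        rw [← Finset.mul_sum, DirectSum.sum_support_decompose, mul_one]
      have h2 : π k x = ∑ h ∈ (DirectSum.decompose 𝒜 (1 : A)).support,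
          π k (x * ((DirectSum.decompose 𝒜 (1 : A)) h : A)) := by
        conv_lhs => rw [h1]
        simp only [hπ, DirectSum.decompose_sum]
        rw [DFinsupp.finset_sum_apply, AddSubmonoidClass.coe_finset_sum]
      rw [πsame k x hx] at h2
      have h3 : ∀ h ∈ (DirectSum.decompose 𝒜 (1 : A)).support,
          π k (x * ((DirectSum.decompose 𝒜 (1 : A)) h : A)) =
            if h = 1 then x * u else 0 := by
        intro h _
        by_cases hh : h = 1
        · subst hh
          have : x * u ∈ 𝒜 (k * 1) ⊔ 𝒜 (1 * k) :=
            hmul k 1 x hx u humem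
          rw [mul_one, one_mul, sup_idem] at this
          rw [if_pos rfl]; exact πsame k _ this
        · have hmem : x * ((DirectSum.decompose 𝒜 (1 : A)) h : A) ∈ 𝒜 (k * h) ⊔ 𝒜 (h * k) :=
            hmul k h x hx _ (DirectSum.decompose 𝒜 (1 : A) h).2
          have hk1 : k * h ≠ k := fun hc => hh (by
            have : k * h = k * 1 := by rw [mul_one]; exact hc
            exact mul_left_cancel this)
          have hk2 : h * k ≠ k := fun hc => hh (by
            have : h * k = 1 * k := by rw [one_mul]; exact hc
            exact mul_right_cancel this)
          simp [πsup _ _ _ _ hmem hk1 hk2, hh]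
      rw [Finset.sum_congr rfl h3, Finset.sum_ite_eq' _ 1 (fun _ => x * u)] at h2
      by_cases h1mem : (1 : G) ∈ (DirectSum.decompose 𝒜 (1 : A)).support
      · rw [if_pos h1mem] at h2; exact h2.symm
      · -- then u = 0, and also x = 0 from h2
        have hu0 : u = 0 := by
          simpa [hu, hπ] using DFinsupp.notMem_support_iff.mp h1mem
        rw [if_neg h1mem] at h2
        rw [hu0, mul_zero, ← h2]
    -- hence u is a right identity on all of A
    have hall : ∀ x : A, x * u = x := by
      intro x
      conv_lhs => rw [← DirectSum.sum_support_decompose 𝒜 x]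
      rw [Finset.sum_mul]
      conv_rhs => rw [← DirectSum.sum_support_decompose 𝒜 x]
      exact Finset.sum_congr rfl fun h _ =>
        hhom h _ (DirectSum.decompose 𝒜 x h).2
    have : u = 1 := by rw [← one_mul u, hall 1]
    rw [← this]; exact humem
  -- Step 2 : project c * a = 1 onto the degree-1 component
  obtain ⟨c, hc⟩ := hinv
  refine ⟨π g⁻¹ c, (DirectSum.decompose 𝒜 c g⁻¹).2, ?_⟩
  have h1 : (1 : A) = ∑ h ∈ (DirectSum.decompose 𝒜 c).support,
      ((DirectSum.decompose 𝒜 c) h : A) * a := by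
    rw [← Finset.sum_mul, DirectSum.sum_support_decompose, hc]
  have h2 : π 1 (1 : A) = ∑ h ∈ (DirectSum.decompose 𝒜 c).support,
      π 1 (((DirectSum.decompose 𝒜 c) h : A) * a) := by
    conv_lhs => rw [h1]
    simp only [hπ, DirectSum.decompose_sum]
    rw [DFinsupp.finset_sum_apply, AddSubmonoidClass.coe_finset_sum]
  rw [πsame 1 1 hone] at h2
  have h3 : ∀ h ∈ (DirectSum.decompose 𝒜 c).support,
      π 1 (((DirectSum.decompose 𝒜 c) h : A) * a) =
        if h = g⁻¹ then π g⁻¹ c * a else 0 := by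
    intro h _
    have hmem : ((DirectSum.decompose 𝒜 c) h : A) * a ∈ 𝒜 (h * g) ⊔ 𝒜 (g * h) :=
      hmul h g _ (DirectSum.decompose 𝒜 c h).2 a ha
    by_cases hh : h = g⁻¹
    · subst hh
      rw [inv_mul_cancel, mul_inv_cancel, sup_idem] at hmem
      rw [if_pos rfl]
      exact πsame 1 _ hmem
    · have hk1 : h * g ≠ 1 := fun hc' => hh (eq_inv_of_mul_eq_one_left hc')
      have hk2 : g * h ≠ 1 := fun hc' => hh (eq_inv_of_mul_eq_one_right hc')
      simp [πsup _ _ _ _ hmem hk1 hk2, hh]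
  rw [Finset.sum_congr rfl h3, Finset.sum_ite_eq' _ g⁻¹ (fun _ => π g⁻¹ c * a)] at h2
  by_cases hmem : g⁻¹ ∈ (DirectSum.decompose 𝒜 c).support
  · rw [if_pos hmem] at h2; exact h2.symm
  · have : π g⁻¹ c = 0 := by
      simpa [hπ] using DFinsupp.notMem_support_iff.mp hmem
    rw [if_neg hmem] at h2
    rw [this, zero_mul, ← h2]
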